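/- The determinant of the n×n matrix with (i,j)-entry binomial(A, L_j - i) for 1 ≤ i,j ≤ n equals [∏_{1≤i<j≤n} (L_j - L_i)] · [∏_{i=1}^{n} (A+i-1)!] / ([∏_{i=1}^{n} (A - L_i + n)!] · [∏_{i=1}^{n} (L_i - 1)!]). -/
import Mathlib

open Polynomial Finset Matrix Nat

noncomputable def qpoly (n A : ℕ) (i : Fin n) : ℚ[X] :=
  (∏ k ∈ range i.val, (X - C (k + 1 : ℚ))) *
  (∏ k ∈ range (n - 1 - i.val), (C ((A : ℚ) + i.val + 2 + k) - X))

lemma qpoly_natDegree_lt (n A : ℕ) (i : Fin n) : (qpoly n A i).natDegree < n := by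
  have h1 : (∏ k ∈ range i.val, (X - C (k + 1 : ℚ))).natDegree ≤ i.val := by
    refine le_trans (natDegree_prod_le _ _) ?_
    refine le_trans (Finset.sum_le_card_nsmul _ _ 1 ?_) (by simp)
    intro k _
    compute_degree
  have h2 : (∏ k ∈ range (n - 1 - i.val), (C ((A : ℚ) + i.val + 2 + k) - X)).natDegree
      ≤ n - 1 - i.val := by
    refine le_trans (natDegree_prod_le _ _) ?_
    refine le_trans (Finset.sum_le_card_nsmul _ _ 1 ?_) (by simp)
    intro k _
    compute_degree
  have := natDegree_mul_le (p := ∏ k ∈ range i.val, (X - C (k + 1 : ℚ)))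
    (q := ∏ k ∈ range (n - 1 - i.val), (C ((A : ℚ) + i.val + 2 + k) - X))
  have hi := i.isLt
  unfold qpoly
  omega

lemma entry_eq (n A : ℕ) (i : Fin n) (x : ℕ) (hx1 : 1 ≤ x) (hx2 : x ≤ A + n) :
    (qpoly n A i).eval (x : ℚ) * (A ! : ℚ) =
    (if i.val + 1 ≤ x then (A.choose (x - (i.val + 1)) : ℚ) else 0) *
      ((x - 1)! : ℚ) * ((A + n - x)! : ℚ) := by
  have hi := i.isLt
  have hev : (qpoly n A i).eval (x : ℚ) =
      (∏ k ∈ range i.val, ((x : ℚ) - (k + 1))) *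
      (∏ k ∈ range (n - 1 - i.val), ((A : ℚ) + i.val + 2 + k - (x : ℚ))) := by
    simp [qpoly, eval_prod]
  rcases lt_or_ge x (i.val + 1) with hc | hc
  · rw [if_neg (by omega), hev]
    have hz : (∏ k ∈ range i.val, ((x : ℚ) - (k + 1))) = 0 := by
      refine Finset.prod_eq_zero (Finset.mem_range.2 (show x - 1 < i.val by omega)) ?_
      push_cast [Nat.cast_sub hx1]
      ring
    rw [hz]; ring
  rcases lt_or_ge (A + i.val + 1) x with hc2 | hc2
  · rw [if_pos hc, Nat.choose_eq_zero_of_lt (by omega), hev]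
    have hz : (∏ k ∈ range (n - 1 - i.val),
        ((A : ℚ) + i.val + 2 + k - (x : ℚ))) = 0 := by
      refine Finset.prod_eq_zero
        (Finset.mem_range.2 (show x - (A + i.val + 2) < n - 1 - i.val by omega)) ?_
      push_cast [Nat.cast_sub (show A + i.val + 2 ≤ x by omega)]
      ring
    rw [hz]; push_cast; ring
  · -- main case : i.val + 1 ≤ x ≤ A + i.val + 1
    have e1 : (∏ k ∈ range i.val, ((x : ℚ) - (k + 1)))
        = ((x - 1).descFactorial i.val : ℚ) := by
      rw [Nat.descFactorial_eq_prod_range, Nat.cast_prod]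
      refine Finset.prod_congr rfl fun k hk => ?_
      have hk' := Finset.mem_range.1 hk
      push_cast [Nat.cast_sub (show k ≤ x - 1 by omega), Nat.cast_sub hx1]
      ring
    have e2 : (∏ k ∈ range (n - 1 - i.val), ((A : ℚ) + i.val + 2 + k - (x : ℚ)))
        = ((A + n - x).descFactorial (n - 1 - i.val) : ℚ) := by
      rw [Nat.descFactorial_eq_prod_range, Nat.cast_prod]
      rw [← Finset.prod_range_reflect (fun k => (((A + n - x - k : ℕ)) : ℚ)) (n - 1 - i.val)]
      refine Finset.prod_congr rfl fun k hk => ?_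
      have hk' := Finset.mem_range.1 hk
      have h2 : A + n - x - (n - 1 - i.val - 1 - k) = A + i.val + 2 + k - x := by omega
      rw [h2]
      push_cast [Nat.cast_sub (show x ≤ A + i.val + 2 + k by omega)]
      ring
    rw [hev, e1, e2, if_pos hc]
    have d1 : (x - (i.val + 1))! * (x - 1).descFactorial i.val = (x - 1)! := by
      have := Nat.factorial_mul_descFactorial (show i.val ≤ x - 1 by omega)
      rwa [show x - 1 - i.val = x - (i.val + 1) by omega] at this
    have d2 : (A - (x - (i.val + 1)))! * (A + n - x).descFactorial (n - 1 - i.val)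
        = (A + n - x)! := by
      have := Nat.factorial_mul_descFactorial (show n - 1 - i.val ≤ A + n - x by omega)
      rwa [show A + n - x - (n - 1 - i.val) = A - (x - (i.val + 1)) by omega] at this
    have d3 : A.choose (x - (i.val + 1)) * (x - (i.val + 1))! * (A - (x - (i.val + 1)))!
        = A ! := Nat.choose_mul_factorial_mul_factorial (by omega)
    have key : (x - 1).descFactorial i.val * (A + n - x).descFactorial (n - 1 - i.val) * A !
        = A.choose (x - (i.val + 1)) * (x - 1)! * (A + n - x)! := by
      calc (x - 1).descFactorial i.val * (A + n - x).descFactorial (n - 1 - i.val) * A !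
          = (x - 1).descFactorial i.val * (A + n - x).descFactorial (n - 1 - i.val) *
            (A.choose (x - (i.val + 1)) * (x - (i.val + 1))! * (A - (x - (i.val + 1)))!) := by
            rw [d3]
        _ = A.choose (x - (i.val + 1)) *
            ((x - (i.val + 1))! * (x - 1).descFactorial i.val) *
            ((A - (x - (i.val + 1)))! * (A + n - x).descFactorial (n - 1 - i.val)) := by ring
        _ = A.choose (x - (i.val + 1)) * (x - 1)! * (A + n - x)! := by rw [d1, d2]
    exact_mod_cast key

lemma swap_prod {n : ℕ} (f : Fin n → Fin n → ℚ) :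
    ∏ i : Fin n, ∏ j ∈ Finset.Ioi i, f i j = ∏ j : Fin n, ∏ i ∈ Finset.Iio j, f i j := by
  rw [Finset.prod_comm' (t' := Finset.univ) (s' := fun j => Finset.Iio j)]
  intro x y
  simp [Finset.mem_Ioi, Finset.mem_Iio]

lemma det_eval (n A : ℕ) (v : Fin n → ℚ) :
    Matrix.det (Matrix.of fun i j : Fin n => (qpoly n A i).eval (v j)) =
    Matrix.det (Matrix.of fun i k : Fin n => (qpoly n A i).coeff k.val) *
      ∏ i : Fin n, ∏ j ∈ Finset.Ioi i, (v j - v i) := by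
  have hm : (Matrix.of fun i j : Fin n => (qpoly n A i).eval (v j)) =
      (Matrix.of fun i k : Fin n => (qpoly n A i).coeff k.val) * (Matrix.vandermonde v)ᵀ := by
    ext i j
    simp only [Matrix.mul_apply, Matrix.of_apply, Matrix.transpose_apply,
      Matrix.vandermonde_apply]
    rw [Polynomial.eval_eq_sum_range' (qpoly_natDegree_lt n A i),
      ← Fin.sum_univ_eq_sum_range]
  rw [hm, Matrix.det_mul, Matrix.det_transpose, Matrix.det_vandermonde]

lemma det_scaled (n A : ℕ) (L : Fin n → ℕ) (h1 : ∀ j, 1 ≤ L j) (h2 : ∀ j, L j ≤ A + n) :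
    Matrix.det (Matrix.of fun i j : Fin n => (qpoly n A i).eval ((L j : ℚ))) * (A ! : ℚ) ^ n =
    Matrix.det (Matrix.of fun i j : Fin n =>
        if i.val + 1 ≤ L j then (A.choose (L j - (i.val + 1)) : ℚ) else 0) *
      ∏ j : Fin n, (((L j - 1)! : ℚ) * ((A + n - L j)! : ℚ)) := by
  have hm : (Matrix.of fun i j : Fin n => (A ! : ℚ) * (qpoly n A i).eval ((L j : ℚ))) =
      (Matrix.of fun i j : Fin n =>
        (((L j - 1)! : ℚ) * ((A + n - L j)! : ℚ)) *
        (Matrix.of fun i j : Fin n =>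
          if i.val + 1 ≤ L j then (A.choose (L j - (i.val + 1)) : ℚ) else 0) i j) := by
    ext i j
    simp only [Matrix.of_apply]
    rw [mul_comm]
    rw [show (qpoly n A i).eval ((L j : ℚ)) * (A ! : ℚ) =
      (if i.val + 1 ≤ L j then (A.choose (L j - (i.val + 1)) : ℚ) else 0) *
        ((L j - 1)! : ℚ) * ((A + n - L j)! : ℚ) from entry_eq n A i (L j) (h1 j) (h2 j)]
    ring
  have lhs := Matrix.det_mul_column (fun _ : Fin n => (A ! : ℚ))
    (Matrix.of fun i j : Fin n => (qpoly n A i).eval ((L j : ℚ)))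
  have rhs := Matrix.det_mul_row
    (fun j : Fin n => ((L j - 1)! : ℚ) * ((A + n - L j)! : ℚ))
    (Matrix.of fun i j : Fin n =>
        if i.val + 1 ≤ L j then (A.choose (L j - (i.val + 1)) : ℚ) else 0)
  simp only [Matrix.of_apply] at lhs rhs
  have hdet := congrArg Matrix.det hm
  simp only [Matrix.of_apply] at hdet
  rw [lhs, rhs, Finset.prod_const, Finset.card_univ, Fintype.card_fin] at hdet
  linear_combination hdet

lemma det_triu (n A : ℕ) :
    Matrix.det (Matrix.of fun i j : Fin n =>
      if i.val + 1 ≤ j.val + 1 then (A.choose (j.val + 1 - (i.val + 1)) : ℚ) else 0) = 1 := by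
  have ht : Matrix.BlockTriangular (Matrix.of fun i j : Fin n =>
      if i.val + 1 ≤ j.val + 1 then (A.choose (j.val + 1 - (i.val + 1)) : ℚ) else 0) id := by
    intro i j hij
    have : ¬ (i.val + 1 ≤ j.val + 1) := by
      simp only [id_eq] at hij
      have := (Fin.lt_iff_val_lt_val).1 hij
      omega
    rw [Matrix.of_apply, if_neg this]
  rw [Matrix.det_of_upperTriangular ht]
  refine Finset.prod_eq_one fun i _ => by simp

lemma vand_nat (n : ℕ) :
    (∏ i : Fin n, ∏ j ∈ Finset.Ioi i, (((j.val + 1 : ℕ) : ℚ) - ((i.val + 1 : ℕ) : ℚ)))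
      = ∏ j : Fin n, (j.val ! : ℚ) := by
  rw [swap_prod]
  refine Finset.prod_congr rfl fun j _ => ?_
  have step1 : ∏ i ∈ Finset.Iio j, (((j.val + 1 : ℕ) : ℚ) - ((i.val + 1 : ℕ) : ℚ))
      = ∏ k ∈ Finset.range j.val, ((j.val - k : ℕ) : ℚ) := by
    rw [← Nat.Iio_eq_range, ← Fin.map_valEmbedding_Iio, Finset.prod_map]
    refine Finset.prod_congr rfl fun i hi => ?_
    have hij : i.val < j.val := Fin.lt_iff_val_lt_val.mp (Finset.mem_Iio.1 hi)
    simp only [Fin.valEmbedding_apply]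
    push_cast [Nat.cast_sub hij.le]
    ring
  rw [step1, ← Nat.cast_prod, ← Nat.descFactorial_eq_prod_range, Nat.descFactorial_self]

theorem stmt3 (n A : ℕ) (L : Fin n → ℕ) (hL1 : ∀ i, 1 ≤ L i) (hL2 : ∀ i, L i ≤ A + 1) :
    Matrix.det (Matrix.of fun i j : Fin n =>
        if i.val + 1 ≤ L j then (Nat.choose A (L j - (i.val + 1)) : ℚ) else 0) =
      (∏ j : Fin n, ∏ i ∈ Finset.Iio j, ((L j : ℚ) - (L i : ℚ))) *
          (∏ i : Fin n, (Nat.factorial (A + i.val) : ℚ)) /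
        ((∏ i : Fin n, (Nat.factorial (A + n - L i) : ℚ)) *
          ∏ i : Fin n, (Nat.factorial (L i - 1) : ℚ)) := by
  rcases Nat.eq_zero_or_pos n with hn | hn
  · subst hn; simp
  have hL2' : ∀ j, L j ≤ A + n := fun j => by have := hL2 j; omega
  have h1 := det_scaled n A L hL1 hL2'
  rw [det_eval] at h1
  have h2 := det_scaled n A (fun j => j.val + 1)
    (fun j => by show 1 ≤ j.val + 1; omega)
    (fun j => by show j.val + 1 ≤ A + n; have := j.isLt; omega)
  rw [det_eval] at h2
  rw [det_triu] at h2
  rw [vand_nat] at h2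
  simp only [Nat.add_sub_cancel, one_mul] at h2
  rw [Finset.prod_mul_distrib] at h1 h2
  -- abbreviations
  have hV0 : (∏ j : Fin n, ((j : Fin n).val ! : ℚ)) ≠ 0 :=
    Finset.prod_ne_zero_iff.2 fun j _ => Nat.cast_ne_zero.2 (Nat.factorial_ne_zero _)
  have hKF : (Matrix.of fun i k : Fin n => (qpoly n A i).coeff k.val).det * (A ! : ℚ) ^ n
      = ∏ j : Fin n, ((A + n - (j.val + 1))! : ℚ) := by
    apply mul_left_cancel₀ hV0
    linear_combination h2
  have hreidx : ∏ j : Fin n, ((A + n - (j.val + 1))! : ℚ)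
      = ∏ i : Fin n, ((A + i.val)! : ℚ) := by
    rw [Fin.prod_univ_eq_prod_range (fun k => ((A + n - (k + 1))! : ℚ)) n,
      Fin.prod_univ_eq_prod_range (fun k => ((A + k)! : ℚ)) n]
    calc ∏ k ∈ range n, ((A + n - (k + 1))! : ℚ)
        = ∏ k ∈ range n, ((A + (n - 1 - k))! : ℚ) :=
          Finset.prod_congr rfl fun k hk => by
            have := Finset.mem_range.1 hk
            congr 2
            omega
      _ = ∏ k ∈ range n, ((A + k)! : ℚ) :=
          Finset.prod_range_reflect (fun m => ((A + m)! : ℚ)) n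
  rw [← swap_prod (fun i j => ((L j : ℚ) - (L i : ℚ))), ← hreidx]
  have hW1 : (∏ i : Fin n, ((A + n - L i)! : ℚ)) ≠ 0 :=
    Finset.prod_ne_zero_iff.2 fun j _ => Nat.cast_ne_zero.2 (Nat.factorial_ne_zero _)
  have hW2 : (∏ i : Fin n, ((L i - 1)! : ℚ)) ≠ 0 :=
    Finset.prod_ne_zero_iff.2 fun j _ => Nat.cast_ne_zero.2 (Nat.factorial_ne_zero _)
  rw [eq_div_iff (mul_ne_zero hW1 hW2)]
  linear_combination -h1 + (∏ i : Fin n, ∏ j ∈ Finset.Ioi i, ((L j : ℚ) - (L i : ℚ))) * hKF
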